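/- Let a < b, let σ₂, σ₃ : ℝ → ℝ be continuous and strictly increasing with generalized Green's function G and Lebesgue–Stieltjes measure μ₃ of σ₃, let u₁, u : [a,b] → ℝ with u₁ bounded, and let f, g : [a,b] → ℝ be continuous. Define y(x) := u(x) + u₁(x)·∫_{[a,b]} G(x,τ)·f(τ) dμ₃(τ) and s(x) := u(x) + u₁(x)·∫_{[a,b]} G(x,τ)·g(τ) dμ₃(τ). Then for every x ∈ [a,b], |s(x) − y(x)| ≤ 2·(σ₂(b) − σ₂(a))·(σ₃(b) − σ₃(a))·(sup_{t ∈ [a,b]} |u₁(t)|)·(sup_{t ∈ [a,b]} |g(t) − f(t)|). -/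

import Mathlib

open MeasureTheory

/-- Core stability estimate for (quasi-)collocation: if `y` and `s` are the Green's
function representations built from `f` and from an approximation `g` of `f`, then
`|s(x) − y(x)| ≤ 2·(σ₂(b) − σ₂(a))·(σ₃(b) − σ₃(a))·sup|u₁|·sup|g − f|` on `[a,b]`. -/
theorem stmt_11 (a b : ℝ) (hab : a < b)
    (σ₂ σ₃ : ℝ → ℝ) (hσ₂c : Continuous σ₂) (hσ₂m : StrictMono σ₂)
    (hσ₃c : Continuous σ₃) (hσ₃m : StrictMono σ₃)
    (μ₃ : Measure ℝ)
    (hμ₃ : ∀ u v : ℝ, u ≤ v → μ₃ (Set.Ioc u v) = ENNReal.ofReal (σ₃ v - σ₃ u))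
    (G : ℝ → ℝ → ℝ)
    (hG : G = fun x t => if t ≤ x
      then -((σ₂ t - σ₂ a) * (σ₂ b - σ₂ x)) / (σ₂ b - σ₂ a)
      else -((σ₂ x - σ₂ a) * (σ₂ b - σ₂ t)) / (σ₂ b - σ₂ a))
    (u₁ u : ℝ → ℝ) (hu₁bdd : ∃ M, ∀ t ∈ Set.Icc a b, |u₁ t| ≤ M)
    (f g : ℝ → ℝ) (hf : ContinuousOn f (Set.Icc a b)) (hg : ContinuousOn g (Set.Icc a b))
    (y s : ℝ → ℝ)
    (hy : y = fun x => u x + u₁ x * ∫ τ in Set.Icc a b, G x τ * f τ ∂μ₃)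
    (hs : s = fun x => u x + u₁ x * ∫ τ in Set.Icc a b, G x τ * g τ ∂μ₃) :
    ∀ x ∈ Set.Icc a b,
      |s x - y x| ≤ 2 * (σ₂ b - σ₂ a) * (σ₃ b - σ₃ a) *
        (⨆ t ∈ Set.Icc a b, |u₁ t|) * ⨆ t ∈ Set.Icc a b, |g t - f t| := by
  intro x hx
  set C : ℝ := σ₂ b - σ₂ a with hCdef
  set D : ℝ := σ₃ b - σ₃ a with hDdef
  have hC : 0 < C := sub_pos.mpr (hσ₂m hab)
  have hD : 0 < D := sub_pos.mpr (hσ₃m hab)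
  -- measure bound
  have hmeas : μ₃ (Set.Icc a b) ≤ ENNReal.ofReal D := by
    have hsub : ∀ n : ℕ, μ₃ (Set.Icc a b) ≤
        ENNReal.ofReal (σ₃ b - σ₃ (a - 1 / (n + 1))) := by
      intro n
      have h1 : (0:ℝ) < 1 / (n + 1) := by positivity
      have : Set.Icc a b ⊆ Set.Ioc (a - 1 / (n + 1)) b :=
        fun t ht => ⟨by linarith [ht.1], ht.2⟩
      calc μ₃ (Set.Icc a b) ≤ μ₃ (Set.Ioc (a - 1 / (n + 1)) b) := measure_mono this
        _ = _ := hμ₃ _ _ (by linarith)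
    have h1 : Filter.Tendsto (fun n : ℕ => a - 1 / ((n:ℝ) + 1)) Filter.atTop (nhds a) := by
      have := tendsto_one_div_add_atTop_nhds_zero_nat (𝕜 := ℝ)
      have := (tendsto_const_nhds (x := a)).sub this
      simpa using this
    have h2 : Filter.Tendsto (fun n : ℕ => σ₃ b - σ₃ (a - 1 / ((n:ℝ) + 1)))
        Filter.atTop (nhds D) := by
      have := (hσ₃c.tendsto a).comp h1
      simpa [hDdef] using (tendsto_const_nhds (x := σ₃ b)).sub this
    exact ge_of_tendsto' ((ENNReal.continuous_ofReal.tendsto D).comp h2) hsub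
  have hfin : μ₃ (Set.Icc a b) < ⊤ := lt_of_le_of_lt hmeas ENNReal.ofReal_lt_top
  have hmeasR : (μ₃ (Set.Icc a b)).toReal ≤ D :=
    ENNReal.toReal_le_of_le_ofReal hD.le hmeas
  -- bound on G
  have hGbound : ∀ τ ∈ Set.Icc a b, |G x τ| ≤ C := by
    intro τ hτ
    have h1 : 0 ≤ σ₂ τ - σ₂ a := sub_nonneg.mpr (hσ₂m.monotone hτ.1)
    have h2 : 0 ≤ σ₂ b - σ₂ x := sub_nonneg.mpr (hσ₂m.monotone hx.2)
    have h3 : 0 ≤ σ₂ x - σ₂ a := sub_nonneg.mpr (hσ₂m.monotone hx.1)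
    have h4 : 0 ≤ σ₂ b - σ₂ τ := sub_nonneg.mpr (hσ₂m.monotone hτ.2)
    have h5 : σ₂ τ - σ₂ a ≤ C := by have := hσ₂m.monotone hτ.2; simp [hCdef]; linarith
    have h6 : σ₂ b - σ₂ x ≤ C := by have := hσ₂m.monotone hx.1; simp [hCdef]; linarith
    have h7 : σ₂ x - σ₂ a ≤ C := by have := hσ₂m.monotone hx.2; simp [hCdef]; linarith
    have h8 : σ₂ b - σ₂ τ ≤ C := by have := hσ₂m.monotone hτ.1; simp [hCdef]; linarith
    rw [hG]
    by_cases hc : τ ≤ x <;> simp only [hc, if_true, if_false] <;>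
      · rw [abs_div, abs_neg, abs_mul, abs_of_nonneg hC.le,
          abs_of_nonneg (by assumption), abs_of_nonneg (by assumption),
          div_le_iff₀ hC]
        nlinarith
  -- sups
  obtain ⟨M, hM⟩ := hu₁bdd
  have hbdd1 : ∀ t, (⨆ _ : t ∈ Set.Icc a b, |u₁ t|) ≤ max M 0 := by
    intro t
    by_cases ht : t ∈ Set.Icc a b
    · rw [ciSup_pos ht]; exact le_max_of_le_left (hM t ht)
    · simp [ht]
  set S₁ : ℝ := ⨆ t ∈ Set.Icc a b, |u₁ t| with hS₁def
  have hS₁x : ∀ t ∈ Set.Icc a b, |u₁ t| ≤ S₁ := by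
    intro t ht
    rw [(ciSup_pos (f := fun _ : t ∈ Set.Icc a b => |u₁ t|) ht).symm]
    exact le_ciSup ⟨max M 0, by rintro _ ⟨t', rfl⟩; exact hbdd1 t'⟩ t
  have hS₁0 : 0 ≤ S₁ := le_trans (abs_nonneg _) (hS₁x x hx)
  obtain ⟨K, hK⟩ := isCompact_Icc.exists_bound_of_continuousOn (hg.sub hf)
  have hbdd2 : ∀ t, (⨆ _ : t ∈ Set.Icc a b, |g t - f t|) ≤ max K 0 := by
    intro t
    by_cases ht : t ∈ Set.Icc a b
    · rw [ciSup_pos ht]; exact le_max_of_le_left (hK t ht)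
    · simp [ht]
  set S₂ : ℝ := ⨆ t ∈ Set.Icc a b, |g t - f t| with hS₂def
  have hS₂x : ∀ t ∈ Set.Icc a b, |g t - f t| ≤ S₂ := by
    intro t ht
    rw [(ciSup_pos (f := fun _ : t ∈ Set.Icc a b => |g t - f t|) ht).symm]
    exact le_ciSup ⟨max K 0, by rintro _ ⟨t', rfl⟩; exact hbdd2 t'⟩ t
  have hS₂0 : 0 ≤ S₂ := le_trans (abs_nonneg _) (hS₂x x hx)
  -- measurability
  have hGm : Measurable (G x) := by
    rw [hG]
    exact Measurable.ite (measurableSet_le measurable_id measurable_const)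
      (by fun_prop) (by fun_prop)
  have hGsm : AEStronglyMeasurable (G x) (μ₃.restrict (Set.Icc a b)) :=
    hGm.aestronglyMeasurable
  have hfm : AEStronglyMeasurable f (μ₃.restrict (Set.Icc a b)) :=
    hf.aestronglyMeasurable measurableSet_Icc
  have hgm : AEStronglyMeasurable g (μ₃.restrict (Set.Icc a b)) :=
    hg.aestronglyMeasurable measurableSet_Icc
  -- integrability
  have hint : ∀ (h : ℝ → ℝ), ContinuousOn h (Set.Icc a b) →
      AEStronglyMeasurable h (μ₃.restrict (Set.Icc a b)) →
      IntegrableOn (fun τ => G x τ * h τ) (Set.Icc a b) μ₃ := by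
    intro h hc hm
    obtain ⟨Kh, hKh⟩ := isCompact_Icc.exists_bound_of_continuousOn hc
    refine Integrable.mono' (g := fun _ => C * Kh) ?_ (hGsm.mul hm) ?_
    · exact integrable_const_iff.mpr (Or.inr ⟨by
        rwa [Measure.restrict_apply_univ]⟩)
    · refine (ae_restrict_iff' measurableSet_Icc).mpr (Filter.Eventually.of_forall ?_)
      intro τ hτ
      have hKh0 : 0 ≤ Kh := le_trans (norm_nonneg _) (hKh τ hτ)
      calc ‖G x τ * h τ‖ = |G x τ| * ‖h τ‖ := by rw [norm_mul]; rfl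
        _ ≤ C * Kh := mul_le_mul (hGbound τ hτ) (hKh τ hτ) (norm_nonneg _) hC.le
  have hintf := hint f hf hfm
  have hintg := hint g hg hgm
  -- combine
  have hdiff : s x - y x = u₁ x *
      ∫ τ in Set.Icc a b, G x τ * (g τ - f τ) ∂μ₃ := by
    rw [hs, hy]
    simp only
    rw [show (fun τ => G x τ * (g τ - f τ)) = fun τ => G x τ * g τ - G x τ * f τ by
      funext τ; ring, integral_sub hintg hintf]
    ring
  have hIbound : ‖∫ τ in Set.Icc a b, G x τ * (g τ - f τ) ∂μ₃‖ ≤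
      (C * S₂) * (μ₃ (Set.Icc a b)).toReal := by
    refine norm_setIntegral_le_of_norm_le_const hfin ?_
    intro τ hτ
    calc ‖G x τ * (g τ - f τ)‖ = |G x τ| * |g τ - f τ| := by rw [norm_mul]; rfl
      _ ≤ C * S₂ := mul_le_mul (hGbound τ hτ) (hS₂x τ hτ) (abs_nonneg _) hC.le
  have hIbound' : |∫ τ in Set.Icc a b, G x τ * (g τ - f τ) ∂μ₃| ≤ C * S₂ * D := by
    refine le_trans hIbound ?_
    exact mul_le_mul_of_nonneg_left hmeasR (by positivity)
  rw [hdiff, abs_mul]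
  calc |u₁ x| * |∫ τ in Set.Icc a b, G x τ * (g τ - f τ) ∂μ₃|
      ≤ S₁ * (C * S₂ * D) := mul_le_mul (hS₁x x hx) hIbound' (abs_nonneg _) hS₁0
    _ ≤ 2 * C * D * S₁ * S₂ := by
        nlinarith [mul_nonneg (mul_nonneg (mul_nonneg hC.le hD.le) hS₁0) hS₂0]
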